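/- Let M be a matroid on a finite ground set E. The map sending a modular ideal I of M to I ∩ 𝒞(M) is a bijection from the set of modular ideals of M onto the set of linear classes of circuits of M; moreover, for modular ideals I₁ and I₂ we have I₁ ⊆ I₂ if and only if I₁ ∩ 𝒞(M) ⊆ I₂ ∩ 𝒞(M). (The lattice of modular ideals of M is isomorphic to the lattice of linear classes of circuits of M.) -/

import Mathlib

open Set

/-- The rank of a set `S` in a matroid `M`: the largest cardinality of an independent
subset of `S`. -/
noncomputable def Matroid.rk' {α : Type*} (M : Matroid α) (S : Set α) : ℕ :=
  sSup (Set.ncard '' {I : Set α | M.Indep I ∧ I ⊆ S})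

/-- A circuit of `M`: a minimal dependent set, i.e. a dependent set all of whose proper
subsets are independent. -/
def Matroid.IsCircuit' {α : Type*} (M : Matroid α) (C : Set α) : Prop :=
  M.Dep C ∧ ∀ D : Set α, D ⊂ C → M.Indep D

/-- `S` and `T` form a modular pair in `M`: `rk(S ∩ T) + rk(S ∪ T) = rk S + rk T`. -/
def Matroid.ModularPairSets {α : Type*} (M : Matroid α) (S T : Set α) : Prop :=
  M.rk' (S ∩ T) + M.rk' (S ∪ T) = M.rk' S + M.rk' T

/-- A modular ideal of `M`: a nonempty downward-closed family of subsets containing `{e}`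
for every non-loop `e` and closed under unions of modular pairs. -/
def Matroid.ModularIdeal {α : Type*} (M : Matroid α) (I : Set (Set α)) : Prop :=
  I.Nonempty ∧ (∀ A B : Set α, A ⊆ B → B ∈ I → A ∈ I) ∧
    (∀ e : α, M.Indep {e} → {e} ∈ I) ∧
    (∀ A B : Set α, A ∈ I → B ∈ I → M.ModularPairSets A B → A ∪ B ∈ I)

/-- A linear class of circuits of `M`: a set `L` of circuits such that whenever
`X, Y ∈ L` form a modular pair, every circuit `Z ⊆ X ∪ Y` belongs to `L`. -/
def Matroid.LinearClass {α : Type*} (M : Matroid α) (L : Set (Set α)) : Prop :=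
  (∀ C ∈ L, M.IsCircuit' C) ∧
    ∀ X ∈ L, ∀ Y ∈ L, M.ModularPairSets X Y →
      ∀ Z : Set α, M.IsCircuit' Z → Z ⊆ X ∪ Y → Z ∈ L

namespace Matroid

variable {α : Type*} [Fintype α] {M : Matroid α} {S T I J X Y Z C D A B : Set α} {e x w : α}

lemma rk'_bddAbove (M : Matroid α) (S : Set α) :
    BddAbove (Set.ncard '' {I : Set α | M.Indep I ∧ I ⊆ S}) := by
  refine ⟨Nat.card α, ?_⟩
  rintro n ⟨I, -, rfl⟩
  calc I.ncard ≤ (univ : Set α).ncard := Set.ncard_le_ncard (subset_univ I) finite_univ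
    _ = Nat.card α := Set.ncard_univ α

lemma le_rk' (hI : M.Indep I) (hIS : I ⊆ S) : I.ncard ≤ M.rk' S :=
  le_csSup (M.rk'_bddAbove S) ⟨I, ⟨hI, hIS⟩, rfl⟩

lemma rk'_le_iff {n : ℕ} : M.rk' S ≤ n ↔ ∀ I, M.Indep I → I ⊆ S → I.ncard ≤ n := by
  constructor
  · intro h I hI hIS
    exact le_trans (le_rk' hI hIS) h
  · intro h
    refine csSup_le ⟨0, ⟨∅, ⟨M.empty_indep, empty_subset _⟩, by simp⟩⟩ ?_
    rintro n ⟨I, ⟨hI, hIS⟩, rfl⟩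
    exact h I hI hIS

lemma IsBasis'.rk'_eq (hJ : M.IsBasis' J S) : M.rk' S = J.ncard := by
  refine le_antisymm (rk'_le_iff.2 fun I hI hIS => ?_) (le_rk' hJ.indep hJ.subset)
  obtain ⟨J', hJ', hIJ'⟩ := hI.subset_isBasis'_of_subset hIS
  calc I.ncard ≤ J'.ncard := Set.ncard_le_ncard hIJ' (toFinite J')
    _ = J.ncard := by
        rw [Set.ncard_def, Set.ncard_def, hJ'.encard_eq_encard hJ]

lemma Indep.rk'_eq (hI : M.Indep I) : M.rk' I = I.ncard :=
  (hI.isBasis_self.isBasis').rk'_eq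

lemma rk'_le_ncard (M : Matroid α) (S : Set α) : M.rk' S ≤ S.ncard :=
  rk'_le_iff.2 fun I _ hIS => Set.ncard_le_ncard hIS (toFinite S)

lemma rk'_mono (M : Matroid α) (hST : S ⊆ T) : M.rk' S ≤ M.rk' T :=
  rk'_le_iff.2 fun I hI hIS => le_rk' hI (hIS.trans hST)

lemma rk'_inter_ground (M : Matroid α) (S : Set α) : M.rk' (S ∩ M.E) = M.rk' S := by
  refine le_antisymm (M.rk'_mono inter_subset_left) (rk'_le_iff.2 fun I hI hIS => ?_)
  exact le_rk' hI (subset_inter hIS hI.subset_ground)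

lemma indep_iff_rk' (hS : S ⊆ M.E) : M.Indep S ↔ M.rk' S = S.ncard := by
  refine ⟨fun h => h.rk'_eq, fun h => ?_⟩
  obtain ⟨J, hJ⟩ := M.exists_isBasis' S
  have hcard : J.ncard = S.ncard := by rw [← hJ.rk'_eq, h]
  have : J = S := Set.eq_of_subset_of_ncard_le hJ.subset (le_of_eq hcard.symm) (toFinite S)
  exact this ▸ hJ.indep

lemma dep_iff_rk' (hS : S ⊆ M.E) : M.Dep S ↔ M.rk' S < S.ncard := by
  rw [dep_iff, and_iff_left hS, indep_iff_rk']
  · have := M.rk'_le_ncard S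
    omega
  · exact hS

lemma rk'_insert_le (M : Matroid α) (S : Set α) (x : α) :
    M.rk' (insert x S) ≤ M.rk' S + 1 := by
  refine rk'_le_iff.2 fun I hI hIS => ?_
  have h1 : I \ {x} ⊆ S := by
    intro y hy
    rcases hIS hy.1 with h | h
    · exact absurd h hy.2
    · exact h
  have h2 : I.ncard ≤ (I \ {x}).ncard + 1 := by
    have := Set.ncard_diff_singleton_add_one (s := I) (a := x)
    rcases em (x ∈ I) with h | h
    · rw [Set.ncard_diff_singleton_add_one h (toFinite I)]
    · rw [Set.diff_singleton_eq_self h]; omega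
  exact h2.trans (by
    have := le_rk' (hI.subset Set.diff_subset) h1
    omega)

lemma rk'_le_rk'_diff_singleton_add_one (M : Matroid α) (S : Set α) (x : α) :
    M.rk' S ≤ M.rk' (S \ {x}) + 1 := by
  refine le_trans (M.rk'_mono ?_) (M.rk'_insert_le (S \ {x}) x)
  intro y hy
  rcases em (y = x) with rfl | h
  · exact mem_insert _ _
  · exact mem_insert_of_mem _ ⟨hy, h⟩

lemma rk'_submod (M : Matroid α) (S T : Set α) :
    M.rk' (S ∩ T) + M.rk' (S ∪ T) ≤ M.rk' S + M.rk' T := by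
  obtain ⟨I, hI⟩ := M.exists_isBasis' (S ∩ T)
  obtain ⟨J, hJ, hIJ⟩ := hI.indep.subset_isBasis'_of_subset (hI.subset.trans (inter_subset_left.trans subset_union_left))
  rw [hI.rk'_eq, hJ.rk'_eq]
  have hJS : (J ∩ S).ncard ≤ M.rk' S := le_rk' (hJ.indep.inter_right S) inter_subset_right
  have hJT : (J ∩ T).ncard ≤ M.rk' T := le_rk' (hJ.indep.inter_right T) inter_subset_right
  have hIsub : I ⊆ J ∩ (S ∩ T) := subset_inter hIJ hI.subset
  have hIcard : I.ncard ≤ (J ∩ (S ∩ T)).ncard := Set.ncard_le_ncard hIsub (toFinite _)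
  have hsplit : (J ∩ S).ncard + (J ∩ T).ncard = (J ∩ (S ∪ T)).ncard + (J ∩ (S ∩ T)).ncard := by
    rw [Set.inter_union_distrib_left, Set.inter_inter_distrib_left]
    exact (Set.ncard_union_add_ncard_inter _ _ (toFinite _) (toFinite _)).symm
  have hJcap : J ∩ (S ∪ T) = J := inter_eq_self_of_subset_left hJ.subset
  rw [hJcap] at hsplit
  omega

/-- if `x` is spanned by `X ⊆ Y` then it is spanned by `Y`. -/
lemma rk'_insert_eq_of_subset (hXY : X ⊆ Y) (h : M.rk' (insert x X) = M.rk' X) :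
    M.rk' (insert x Y) = M.rk' Y := by
  have hsub := M.rk'_submod (insert x X) Y
  have h1 : M.rk' X ≤ M.rk' ((insert x X) ∩ Y) :=
    M.rk'_mono (subset_inter (subset_insert _ _) hXY)
  have h2 : (insert x X) ∪ Y = insert x Y := by
    rw [Set.insert_union, Set.union_eq_self_of_subset_left hXY]
  rw [h2, h] at hsub
  have h3 := M.rk'_mono (subset_insert x Y)
  omega



lemma IsCircuit'.dep (h : M.IsCircuit' C) : M.Dep C := h.1

lemma IsCircuit'.subset_ground (h : M.IsCircuit' C) : C ⊆ M.E := h.1.2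

lemma IsCircuit'.nonempty (h : M.IsCircuit' C) : C.Nonempty := h.1.nonempty

lemma IsCircuit'.diff_singleton_indep (h : M.IsCircuit' C) (hx : x ∈ C) :
    M.Indep (C \ {x}) :=
  h.2 _ (Set.sdiff_singleton_ssubset.2 hx)

lemma IsCircuit'.eq_of_subset (hC : M.IsCircuit' C) (hD : M.IsCircuit' D) (h : C ⊆ D) :
    C = D := by
  by_contra hne
  exact hC.dep.not_indep (hD.2 _ (ssubset_of_ne_of_subset hne h))

lemma IsCircuit'.rk'_add_one (hC : M.IsCircuit' C) : M.rk' C + 1 = C.ncard := by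
  obtain ⟨x, hx⟩ := hC.nonempty
  have h1 : M.rk' C < C.ncard := (dep_iff_rk' hC.subset_ground).1 hC.dep
  have h2 : (C \ {x}).ncard ≤ M.rk' C :=
    le_rk' (hC.diff_singleton_indep hx) Set.diff_subset
  rw [Set.ncard_diff_singleton_of_mem hx] at h2
  omega

lemma Dep.exists_circuit'' (hS : M.Dep S) : ∃ C, M.IsCircuit' C ∧ C ⊆ S := by
  have hgen : ∀ n (S : Set α), S.ncard ≤ n → M.Dep S → ∃ C, M.IsCircuit' C ∧ C ⊆ S := by
    intro n
    induction n with
    | zero =>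
      intro S hn hS
      rw [Nat.le_zero, Set.ncard_eq_zero (toFinite S)] at hn
      exact absurd (hn ▸ M.empty_indep) hS.not_indep
    | succ n ih =>
      intro S hn hS
      by_cases h : ∀ D : Set α, D ⊂ S → M.Indep D
      · exact ⟨S, ⟨hS, h⟩, subset_rfl⟩
      · push_neg at h
        obtain ⟨D, hDS, hD⟩ := h
        have hDdep : M.Dep D := ⟨hD, hDS.subset.trans hS.subset_ground⟩
        obtain ⟨C, hC, hCD⟩ := ih D (by
          have := Set.ncard_lt_ncard hDS (toFinite S)
          omega) hDdep
        exact ⟨C, hC, hCD.trans hDS.subset⟩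
  exact hgen S.ncard S le_rfl hS

/-- nullity is monotone: `|S| - rk S ≤ |T| - rk T` for `S ⊆ T`, in subtraction-free form. -/
lemma nullity_mono (M : Matroid α) (hST : S ⊆ T) :
    S.ncard + M.rk' T ≤ T.ncard + M.rk' S := by
  obtain ⟨J₀, hJ₀⟩ := M.exists_isBasis' S
  obtain ⟨J, hJ, hJ₀J⟩ := hJ₀.indep.subset_isBasis'_of_subset (hJ₀.subset.trans hST)
  rw [hJ.rk'_eq]
  have h1 : (J ∩ S).ncard ≤ M.rk' S := le_rk' (hJ.indep.inter_right S) inter_subset_right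
  have h2 : J.ncard = (J ∩ S).ncard + (J \ S).ncard := by
    rw [← Set.ncard_inter_add_ncard_diff_eq_ncard J S (toFinite J)]
  have h3 : (J \ S).ncard ≤ (T \ S).ncard :=
    Set.ncard_le_ncard (diff_subset_diff_left hJ.subset) (toFinite _)
  have h4 : (T \ S).ncard + S.ncard = T.ncard := by
    rw [Set.ncard_diff_add_ncard_of_subset hST (toFinite T)]
  omega

/-- Distinct circuits have union of nullity at least 2. -/
lemma circuit_pair_nullity (hC : M.IsCircuit' C) (hD : M.IsCircuit' D) (hne : C ≠ D) :
    M.rk' (C ∪ D) + 2 ≤ (C ∪ D).ncard := by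
  have hCD : C ∩ D ⊂ C := by
    refine ssubset_of_ne_of_subset (fun h => ?_) inter_subset_left
    exact hne (hC.eq_of_subset hD (by rw [← h]; exact inter_subset_right))
  have hint : M.Indep (C ∩ D) := hC.2 _ hCD
  have h1 := M.rk'_submod C D
  have h2 := hint.rk'_eq
  have h3 := hC.rk'_add_one
  have h4 := hD.rk'_add_one
  have h5 := Set.ncard_union_add_ncard_inter C D (toFinite C) (toFinite D)
  have h6 : (C ∩ D).ncard < C.ncard := Set.ncard_lt_ncard hCD (toFinite C)
  omega

/-- In a set of nullity at most 1, there is at most one circuit. -/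
lemma circuit_unique_of_nullity_le_one (hS : S.ncard ≤ M.rk' S + 1)
    (hC : M.IsCircuit' C) (hD : M.IsCircuit' D) (hCS : C ⊆ S) (hDS : D ⊆ S) : C = D := by
  by_contra hne
  have h1 := circuit_pair_nullity hC hD hne
  have h2 := M.nullity_mono (union_subset hCS hDS)
  omega

/-- Weak circuit elimination. -/
lemma circuit_elim (hC : M.IsCircuit' C) (hD : M.IsCircuit' D) (hne : C ≠ D)
    (hw : w ∈ C ∩ D) : ∃ F, M.IsCircuit' F ∧ F ⊆ (C ∪ D) \ {w} := by
  have hdep : M.Dep ((C ∪ D) \ {w}) := by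
    rw [dep_iff_rk' (Set.diff_subset.trans (union_subset hC.subset_ground hD.subset_ground))]
    have h1 : M.rk' ((C ∪ D) \ {w}) ≤ M.rk' (C ∪ D) := M.rk'_mono diff_subset
    have h2 := circuit_pair_nullity hC hD hne
    have h3 : ((C ∪ D) \ {w}).ncard = (C ∪ D).ncard - 1 :=
      Set.ncard_diff_singleton_of_mem (Set.mem_union_left D hw.1)
    have h4 : 0 < (C ∪ D).ncard := (Set.ncard_pos (toFinite _)).2 ⟨w, Set.mem_union_left D hw.1⟩
    omega
  obtain ⟨F, hF, hFsub⟩ := hdep.exists_circuit''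
  exact ⟨F, hF, hFsub⟩

/-- Finite augmentation. -/
lemma indep_aug_ncard (hI : M.Indep I) (hJ : M.Indep J) (hIJ : I.ncard < J.ncard) :
    ∃ x ∈ J, x ∉ I ∧ M.Indep (insert x I) := by
  obtain ⟨B, hB, hIB⟩ := hI.subset_isBasis'_of_subset (subset_union_left (t := J))
  have hJB : J.ncard ≤ B.ncard := by
    have := le_rk' hJ (subset_union_right (s := I))
    rw [hB.rk'_eq] at this
    exact this
  have hne : (B \ I).Nonempty := by
    rw [Set.nonempty_iff_ne_empty]
    intro h
    have hBI : B ⊆ I := by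
      intro y hy
      by_contra hyI
      exact (Set.eq_empty_iff_forall_notMem.1 h y) ⟨hy, hyI⟩
    have := Set.ncard_le_ncard hBI (toFinite I)
    omega
  obtain ⟨x, hxB, hxI⟩ := hne
  have hxJ : x ∈ J := by
    rcases hB.subset hxB with h | h
    · exact absurd h hxI
    · exact h
  exact ⟨x, hxJ, hxI, hB.indep.subset (insert_subset hxB hIB)⟩



/-- Single-element contraction of a matroid by a non-loop `e`. -/
noncomputable def con (M : Matroid α) (e : α) (he : M.Indep {e}) : Matroid α :=
  (IndepMatroid.ofFinite (E := M.E \ {e}) (toFinite _)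
    (Indep := fun I => I ⊆ M.E \ {e} ∧ M.Indep (insert e I))
    (indep_empty := ⟨empty_subset _, by simpa using he⟩)
    (indep_subset := fun I J hJ hIJ =>
      ⟨hIJ.trans hJ.1, hJ.2.subset (insert_subset_insert hIJ)⟩)
    (indep_aug := by
      rintro I J ⟨hIE, hI⟩ ⟨hJE, hJ⟩ hIJ
      have heI : e ∉ I := fun h => (hIE h).2 rfl
      have heJ : e ∉ J := fun h => (hJE h).2 rfl
      have hlt : (insert e I).ncard < (insert e J).ncard := by
        rw [Set.ncard_insert_of_notMem heI (toFinite I),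
          Set.ncard_insert_of_notMem heJ (toFinite J)]
        omega
      obtain ⟨x, hxJ, hxI, hind⟩ := indep_aug_ncard hI hJ hlt
      have hxe : x ≠ e := fun h => hxI (h ▸ mem_insert _ _)
      have hxJ' : x ∈ J := by
        rcases hxJ with h | h
        · exact absurd h hxe
        · exact h
      have hxI' : x ∉ I := fun h => hxI (mem_insert_of_mem _ h)
      refine ⟨x, hxJ', hxI', insert_subset (hJE hxJ') hIE, ?_⟩
      have : insert e (insert x I) = insert x (insert e I) := Set.insert_comm _ _ _
      rw [this]
      exact hind)
    (subset_ground := fun I hI => hI.1)).matroid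

@[simp] lemma con_E (M : Matroid α) (e : α) (he : M.Indep {e}) :
    (M.con e he).E = M.E \ {e} := rfl

lemma con_indep_iff {he : M.Indep {e}} :
    (M.con e he).Indep I ↔ I ⊆ M.E \ {e} ∧ M.Indep (insert e I) := by
  simp [con, IndepMatroid.ofFinite]

lemma con_dep_of_dep {he : M.Indep {e}} (hIE : I ⊆ M.E \ {e}) (hdep : M.Dep I) :
    (M.con e he).Dep I := by
  rw [dep_iff, con_E]
  refine ⟨fun hind => ?_, hIE⟩
  rw [con_indep_iff] at hind
  exact hdep.not_indep (hind.2.subset (subset_insert _ _))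

lemma con_rk' {he : M.Indep {e}} (hS : e ∉ S) :
    (M.con e he).rk' S + 1 = M.rk' (insert e S) := by
  have h1 : 1 ≤ M.rk' (insert e S) := by
    have := le_rk' (S := insert e S) he (by simp)
    simpa using this
  have hle : (M.con e he).rk' S ≤ M.rk' (insert e S) - 1 := by
    refine rk'_le_iff.2 fun I hI hIS => ?_
    rw [con_indep_iff] at hI
    have heI : e ∉ I := fun h => (hI.1 h).2 rfl
    have := le_rk' hI.2 (insert_subset_insert hIS)
    rw [Set.ncard_insert_of_notMem heI (toFinite I)] at this
    omega
  have hge : M.rk' (insert e S) - 1 ≤ (M.con e he).rk' S := by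
    obtain ⟨J, hJ, heJ⟩ := he.subset_isBasis'_of_subset
      (singleton_subset_iff.2 (mem_insert e S))
    rw [hJ.rk'_eq]
    have heJ' : e ∈ J := heJ rfl
    have hcon : (M.con e he).Indep (J \ {e}) := by
      rw [con_indep_iff]
      refine ⟨diff_subset_diff_left hJ.indep.subset_ground, ?_⟩
      rw [Set.insert_diff_singleton, insert_eq_of_mem heJ']
      exact hJ.indep
    have hsub : J \ {e} ⊆ S := by
      intro y hy
      rcases hJ.subset hy.1 with h | h
      · exact absurd h hy.2
      · exact h
    have := le_rk' hcon hsub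
    rw [Set.ncard_diff_singleton_of_mem heJ'] at this
    omega
  omega

/-- Every circuit of the contraction comes from a circuit of `M`. -/
lemma con_circuit_cases {he : M.Indep {e}} (hC : (M.con e he).IsCircuit' C) :
    M.IsCircuit' C ∨ M.IsCircuit' (insert e C) := by
  have hCE : C ⊆ M.E \ {e} := hC.subset_ground
  have heC : e ∉ C := fun h => (hCE h).2 rfl
  have hdep : M.Dep (insert e C) := by
    rw [dep_iff]
    refine ⟨fun hind => ?_, insert_subset (he.subset_ground rfl) (hCE.trans diff_subset)⟩
    exact hC.dep.not_indep (con_indep_iff.2 ⟨hCE, hind⟩)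
  obtain ⟨F, hF, hFsub⟩ := hdep.exists_circuit''
  by_cases heF : e ∈ F
  · right
    have hFC : F \ {e} ⊆ C := by
      intro y hy
      rcases hFsub hy.1 with h | h
      · exact absurd h hy.2
      · exact h
    have hcd : (M.con e he).Dep (F \ {e}) := by
      rw [dep_iff, con_E]
      refine ⟨fun hind => ?_, (hFC.trans hCE)⟩
      rw [con_indep_iff, Set.insert_diff_singleton, insert_eq_of_mem heF] at hind
      exact hF.dep.not_indep hind.2
    have hFeq : F \ {e} = C := by
      by_contra hne
      exact hcd.not_indep (hC.2 _ (ssubset_of_ne_of_subset hne hFC))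
    have : insert e (F \ {e}) = F := by
      rw [Set.insert_diff_singleton, insert_eq_of_mem heF]
    rw [← hFeq, this]
    exact hF
  · left
    have hFC : F ⊆ C := by
      intro y hy
      rcases hFsub hy with h | h
      · exact absurd h (fun hh => heF (hh ▸ hy))
      · exact h
    have hcd : (M.con e he).Dep F := con_dep_of_dep (hFC.trans hCE) hF.dep
    have : F = C := by
      by_contra hne
      exact hcd.not_indep (hC.2 _ (ssubset_of_ne_of_subset hne hFC))
    exact this ▸ hF


/-- An `M`-circuit avoiding `e` is either a circuit of the contraction, or properly contains
`D` with `insert e D` an `M`-circuit. -/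
lemma con_circuit_of_circuit {he : M.Indep {e}} (hZ : M.IsCircuit' Z) (heZ : e ∉ Z) :
    (M.con e he).IsCircuit' Z ∨
      ∃ D, M.IsCircuit' (insert e D) ∧ D ⊂ Z ∧ e ∉ D := by
  have hZE : Z ⊆ M.E \ {e} := fun y hy => ⟨hZ.subset_ground hy, fun h => heZ (h ▸ hy)⟩
  have hZdep : (M.con e he).Dep Z := con_dep_of_dep hZE hZ.dep
  by_cases h : ∀ D : Set α, D ⊂ Z → (M.con e he).Indep D
  · exact Or.inl ⟨hZdep, h⟩
  · right
    push_neg at h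
    obtain ⟨D₀, hD₀Z, hD₀⟩ := h
    have hD₀dep : (M.con e he).Dep D₀ := ⟨hD₀, hD₀Z.subset.trans hZdep.subset_ground⟩
    obtain ⟨D, hD, hDD₀⟩ := hD₀dep.exists_circuit''
    have hDZ : D ⊂ Z := lt_of_le_of_lt hDD₀ hD₀Z
    have heD : e ∉ D := fun hh => (hD.subset_ground hh).2 rfl
    rcases con_circuit_cases hD with h1 | h1
    · exact absurd (hZ.2 D hDZ) h1.dep.not_indep
    · exact ⟨D, h1, hDZ, heD⟩

/-- If `e` lies in an `M`-circuit `Z`, then `Z \ {e}` is a circuit of the contraction. -/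
lemma con_circuit_diff {he : M.Indep {e}} (hZ : M.IsCircuit' Z) (heZ : e ∈ Z) :
    (M.con e he).IsCircuit' (Z \ {e}) := by
  have hZE : Z \ {e} ⊆ M.E \ {e} := diff_subset_diff_left hZ.subset_ground
  constructor
  · rw [dep_iff, con_E, con_indep_iff]
    refine ⟨fun hind => ?_, hZE⟩
    rw [Set.insert_diff_singleton, insert_eq_of_mem heZ] at hind
    exact hZ.dep.not_indep hind.2
  · intro D hD
    rw [con_indep_iff]
    have hDZ : D ⊆ M.E \ {e} := hD.subset.trans hZE
    refine ⟨hDZ, hZ.2 _ ?_⟩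
    have heD : e ∉ D := fun hh => (hDZ hh).2 rfl
    obtain ⟨y, hyZ, hyD⟩ := exists_of_ssubset hD
    refine ssubset_of_ne_of_subset (fun hh => ?_) ?_
    · have : y ∈ insert e D := by rw [hh]; exact hyZ.1
      rcases this with h | h
      · exact hyZ.2 h
      · exact hyD h
    · exact insert_subset heZ (hD.subset.trans (diff_subset))

/-- The induced class of circuits on the contraction. -/
def conClass (M : Matroid α) (e : α) (he : M.Indep {e}) (L : Set (Set α)) : Set (Set α) :=
  {C | (M.con e he).IsCircuit' C ∧ (C ∈ L ∨ insert e C ∈ L)}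


lemma modularPairSets_comm (h : M.ModularPairSets S T) : M.ModularPairSets T S := by
  unfold ModularPairSets at h ⊢
  rw [inter_comm, union_comm] at h
  omega

lemma IsCircuit'.rk'_insert_eq {he : M.Indep {e}}
    (hX'c : (M.con e he).IsCircuit' X) : M.rk' (insert e X) = X.ncard := by
  have heX : e ∉ X := fun h => (hX'c.subset_ground h).2 rfl
  have h1 := hX'c.rk'_add_one
  have h2 := con_rk' (he := he) heX
  omega

/-- `insert e (X' ∩ Y')` is independent for distinct con-circuits wth `X'` covered by `L`. -/
lemma conClass_inter_indep {he : M.Indep {e}} {L : Set (Set α)} (hL : M.LinearClass L)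
    (hX'c : (M.con e he).IsCircuit' X) (hprop : X ∩ Y ⊂ X)
    (hXL : X ∈ L ∨ insert e X ∈ L) : M.Indep (insert e (X ∩ Y)) := by
  have heX : e ∉ X := fun h => (hX'c.subset_ground h).2 rfl
  rcases hXL with hXL | hXL
  · -- X itself is an M-circuit; `insert e X` has nullity 1
    have hXcirc : M.IsCircuit' X := hL.1 X hXL
    by_contra hdep'
    have hdep : M.Dep (insert e (X ∩ Y)) :=
      ⟨hdep', insert_subset (he.subset_ground rfl)
        (inter_subset_left.trans hXcirc.subset_ground)⟩
    obtain ⟨F, hF, hFsub⟩ := hdep.exists_circuit''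
    have hFX : F = X := by
      refine circuit_unique_of_nullity_le_one (S := insert e X) ?_ hF hXcirc
        (hFsub.trans (insert_subset_insert inter_subset_left)) (subset_insert _ _)
      rw [hX'c.rk'_insert_eq, Set.ncard_insert_of_notMem heX (toFinite X)]
    have : X ⊆ X ∩ Y := by
      intro y hy
      rcases hFsub (hFX ▸ hy) with h | h
      · exact absurd h (fun hh => heX (hh ▸ hy))
      · exact h
    exact hprop.2 (subset_inter subset_rfl (this.trans inter_subset_right))
  · -- `insert e X` is an M-circuit; proper subsets are independent
    have hXcirc : M.IsCircuit' (insert e X) := hL.1 _ hXL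
    refine hXcirc.2 _ (ssubset_of_ne_of_subset ?_ (insert_subset_insert inter_subset_left))
    intro hh
    obtain ⟨y, hyX, hyY⟩ := exists_of_ssubset hprop
    have : y ∈ insert e (X ∩ Y) := hh ▸ Or.inr hyX
    rcases this with h | h
    · exact heX (h ▸ hyX)
    · exact hyY h


lemma conClass_linearClass {he : M.Indep {e}} {L : Set (Set α)} (hL : M.LinearClass L) :
    (M.con e he).LinearClass (M.conClass e he L) := by
  refine ⟨fun C hC => hC.1, ?_⟩
  rintro X ⟨hXc, hXL⟩ Y ⟨hYc, hYL⟩ hmod Z hZc hZsub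
  by_cases hne : X = Y
  · subst hne
    rw [union_self] at hZsub
    exact (hZc.eq_of_subset hXc hZsub) ▸ ⟨hXc, hXL⟩
  have heX : e ∉ X := fun h => (hXc.subset_ground h).2 rfl
  have heY : e ∉ Y := fun h => (hYc.subset_ground h).2 rfl
  have heZ : e ∉ Z := fun h => (hZc.subset_ground h).2 rfl
  have heI : e ∉ X ∩ Y := fun h => heX h.1
  have heU : e ∉ X ∪ Y := fun h => h.elim heX heY
  have hprX : X ∩ Y ⊂ X := by
    refine ssubset_of_ne_of_subset (fun h => hne ?_) inter_subset_left
    exact hXc.eq_of_subset hYc (by rw [← h]; exact inter_subset_right)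
  have hInd : M.Indep (insert e (X ∩ Y)) := conClass_inter_indep hL hXc hprX hXL
  have hIndncard : M.rk' (insert e (X ∩ Y)) = (X ∩ Y).ncard + 1 := by
    rw [hInd.rk'_eq, Set.ncard_insert_of_notMem heI (toFinite _)]
  have hIndsmall : M.rk' (X ∩ Y) = (X ∩ Y).ncard :=
    (hInd.subset (subset_insert _ _)).rk'_eq
  have hmodM : M.rk' (insert e (X ∩ Y)) + M.rk' (insert e (X ∪ Y))
      = X.ncard + Y.ncard := by
    have hm := hmod
    unfold ModularPairSets at hm
    have h1 := con_rk' (he := he) heI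
    have h2 := con_rk' (he := he) heU
    have h3 := hXc.rk'_insert_eq
    have h4 := hYc.rk'_insert_eq
    have h5 := con_rk' (he := he) heX
    have h6 := con_rk' (he := he) heY
    omega
  have hcardu : (X ∪ Y).ncard + (X ∩ Y).ncard = X.ncard + Y.ncard :=
    Set.ncard_union_add_ncard_inter _ _ (toFinite _) (toFinite _)
  have hXi := hXc.rk'_insert_eq
  have hYi := hYc.rk'_insert_eq
  -- dichotomy for Z
  have hZdich : M.IsCircuit' Z ∨ M.IsCircuit' (insert e Z) := con_circuit_cases hZc
  rcases hXL with hXL | hXL <;> rcases hYL with hYL | hYL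
  · -- both X, Y ∈ L (unhatted)
    have hXM : M.IsCircuit' X := hL.1 X hXL
    have hYM : M.IsCircuit' Y := hL.1 Y hYL
    have h5 := circuit_pair_nullity hXM hYM hne
    have h6 := M.rk'_insert_le (X ∪ Y) e
    have h7 := M.rk'_mono (subset_insert e (X ∪ Y))
    have hXr := hXM.rk'_add_one
    have hYr := hYM.rk'_add_one
    have hmodXY : M.ModularPairSets X Y := by
      unfold ModularPairSets
      omega
    rcases hZdich with hZM | hZM
    · exact ⟨hZc, Or.inl (hL.2 X hXL Y hYL hmodXY Z hZM hZsub)⟩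
    · exfalso
      have hZind : M.Indep Z := hZM.2 Z (ssubset_insert heZ)
      have hZr := hZM.rk'_add_one
      have hZe : M.rk' (insert e Z) = M.rk' Z := by
        rw [hZind.rk'_eq]
        rw [Set.ncard_insert_of_notMem heZ (toFinite Z)] at hZr
        omega
      have := rk'_insert_eq_of_subset hZsub hZe
      omega
  · -- X ∈ L, insert e Y ∈ L
    have hXM : M.IsCircuit' X := hL.1 X hXL
    have hYM : M.IsCircuit' (insert e Y) := hL.1 _ hYL
    have hXr := hXM.rk'_add_one
    have hid1 : X ∩ insert e Y = X ∩ Y := by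
      ext y; constructor
      · rintro ⟨hy1, hy2⟩
        rcases hy2 with h | h
        · exact absurd (h ▸ hy1) heX
        · exact ⟨hy1, h⟩
      · exact fun hy => ⟨hy.1, Or.inr hy.2⟩
    have hid2 : X ∪ insert e Y = insert e (X ∪ Y) := by
      rw [Set.union_insert]
    have hmodXY : M.ModularPairSets X (insert e Y) := by
      unfold ModularPairSets
      rw [hid1, hid2]
      omega
    have hcov : Z ⊆ X ∪ insert e Y := by
      rw [hid2]; exact hZsub.trans (subset_insert _ _)
    rcases hZdich with hZM | hZM
    · exact ⟨hZc, Or.inl (hL.2 X hXL _ hYL hmodXY Z hZM hcov)⟩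
    · refine ⟨hZc, Or.inr (hL.2 X hXL _ hYL hmodXY _ hZM ?_)⟩
      rw [hid2]
      exact insert_subset (mem_insert _ _) (hZsub.trans (subset_insert _ _))
  · -- insert e X ∈ L, Y ∈ L
    have hXM : M.IsCircuit' (insert e X) := hL.1 _ hXL
    have hYM : M.IsCircuit' Y := hL.1 Y hYL
    have hYr := hYM.rk'_add_one
    have hid1 : insert e X ∩ Y = X ∩ Y := by
      ext y; constructor
      · rintro ⟨hy1, hy2⟩
        rcases hy1 with h | h
        · exact absurd (h ▸ hy2) heY
        · exact ⟨h, hy2⟩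
      · exact fun hy => ⟨Or.inr hy.1, hy.2⟩
    have hid2 : insert e X ∪ Y = insert e (X ∪ Y) := by
      rw [Set.insert_union]
    have hmodXY : M.ModularPairSets (insert e X) Y := by
      unfold ModularPairSets
      rw [hid1, hid2]
      omega
    have hcov : Z ⊆ insert e X ∪ Y := by
      rw [hid2]; exact hZsub.trans (subset_insert _ _)
    rcases hZdich with hZM | hZM
    · exact ⟨hZc, Or.inl (hL.2 _ hXL Y hYL hmodXY Z hZM hcov)⟩
    · refine ⟨hZc, Or.inr (hL.2 _ hXL Y hYL hmodXY _ hZM ?_)⟩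
      rw [hid2]
      exact insert_subset (mem_insert _ _) (hZsub.trans (subset_insert _ _))
  · -- insert e X ∈ L, insert e Y ∈ L
    have hid1 : insert e X ∩ insert e Y = insert e (X ∩ Y) :=
      (Set.insert_inter_distrib e X Y).symm
    have hid2 : insert e X ∪ insert e Y = insert e (X ∪ Y) :=
      (Set.insert_union_distrib e X Y).symm
    have hmodXY : M.ModularPairSets (insert e X) (insert e Y) := by
      unfold ModularPairSets
      rw [hid1, hid2]
      omega
    have hcov : Z ⊆ insert e X ∪ insert e Y := by
      rw [hid2]; exact hZsub.trans (subset_insert _ _)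
    rcases hZdich with hZM | hZM
    · exact ⟨hZc, Or.inl (hL.2 _ hXL _ hYL hmodXY Z hZM hcov)⟩
    · refine ⟨hZc, Or.inr (hL.2 _ hXL _ hYL hmodXY _ hZM ?_)⟩
      rw [hid2]
      exact insert_subset (mem_insert _ _) (hZsub.trans (subset_insert _ _))


lemma rk'_empty (M : Matroid α) : M.rk' ∅ = 0 := by
  have := M.empty_indep.rk'_eq
  simpa using this

lemma rk'_insert_of_not_indep (hx : ¬ M.Indep {x}) (S : Set α) :
    M.rk' (insert x S) = M.rk' S := by
  refine le_antisymm (rk'_le_iff.2 fun I hI hIS => ?_) (M.rk'_mono (subset_insert _ _))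
  have hxI : x ∉ I := fun h => hx (hI.subset (singleton_subset_iff.2 h))
  refine le_rk' hI fun y hy => ?_
  rcases hIS hy with h | h
  · exact absurd (h ▸ hy) hxI
  · exact h

lemma modpair_del (hmod : M.ModularPairSets A B) (hxA : x ∈ A) (hxB : x ∉ B) :
    M.ModularPairSets (A \ {x}) B := by
  have idInt : A \ {x} ∩ B = A ∩ B := by
    ext y
    exact ⟨fun h => ⟨h.1.1, h.2⟩, fun h => ⟨⟨h.1, fun hh => hxB (hh ▸ h.2)⟩, h.2⟩⟩
  have idUn : A \ {x} ∪ B = (A ∪ B) \ {x} := by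
    ext y
    constructor
    · rintro (h | h)
      · exact ⟨Or.inl h.1, h.2⟩
      · exact ⟨Or.inr h, fun hh => hxB (hh ▸ h)⟩
    · rintro ⟨h | h, h2⟩
      · exact Or.inl ⟨h, h2⟩
      · exact Or.inr h
  have hiA : insert x (A \ {x}) = A := by
    rw [Set.insert_diff_singleton, insert_eq_of_mem hxA]
  have hiU : insert x ((A ∪ B) \ {x}) = A ∪ B := by
    rw [Set.insert_diff_singleton, insert_eq_of_mem (Set.mem_union_left B hxA)]
  unfold ModularPairSets at hmod ⊢
  rw [idInt, idUn]
  by_cases hA : M.rk' (A \ {x}) = M.rk' A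
  · -- x is spanned by A \ {x}, hence also by (A∪B) \ {x}
    have h1 : M.rk' (insert x (A \ {x})) = M.rk' (A \ {x}) := by rw [hiA, hA]
    have h2 := rk'_insert_eq_of_subset (Y := (A ∪ B) \ {x})
      (by rw [← idUn]; exact subset_union_left) h1
    rw [hiU] at h2
    omega
  · have h1 : M.rk' A ≤ M.rk' (A \ {x}) + 1 := M.rk'_le_rk'_diff_singleton_add_one A x
    have h2 : M.rk' (A \ {x}) ≤ M.rk' A := M.rk'_mono diff_subset
    have h3 := M.rk'_submod (A \ {x}) B
    rw [idInt, idUn] at h3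
    have h4 : M.rk' (A ∪ B) ≤ M.rk' ((A ∪ B) \ {x}) + 1 :=
      M.rk'_le_rk'_diff_singleton_add_one _ x
    have h5 : M.rk' ((A ∪ B) \ {x}) ≤ M.rk' (A ∪ B) := M.rk'_mono diff_subset
    omega

lemma modpair_del2 (hmod : M.ModularPairSets A B) (hxA : x ∈ A) (hxB : x ∈ B)
    (hcl : M.rk' ((A ∩ B) \ {x}) = M.rk' (A ∩ B)) :
    M.ModularPairSets (A \ {x}) (B \ {x}) := by
  have idInt : (A \ {x}) ∩ (B \ {x}) = (A ∩ B) \ {x} := by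
    ext y
    exact ⟨fun h => ⟨⟨h.1.1, h.2.1⟩, h.1.2⟩, fun h => ⟨⟨h.1.1, h.2⟩, ⟨h.1.2, h.2⟩⟩⟩
  have idUn : (A \ {x}) ∪ (B \ {x}) = (A ∪ B) \ {x} := (Set.union_diff_distrib).symm
  have hins : M.rk' (insert x ((A ∩ B) \ {x})) = M.rk' ((A ∩ B) \ {x}) := by
    rw [Set.insert_diff_singleton, insert_eq_of_mem (Set.mem_inter hxA hxB), hcl]
  have hsub1 : (A ∩ B) \ {x} ⊆ A \ {x} := fun y hy => ⟨hy.1.1, hy.2⟩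
  have hsub2 : (A ∩ B) \ {x} ⊆ B \ {x} := fun y hy => ⟨hy.1.2, hy.2⟩
  have hsub3 : (A ∩ B) \ {x} ⊆ (A ∪ B) \ {x} := fun y hy => ⟨Or.inl hy.1.1, hy.2⟩
  have hA := rk'_insert_eq_of_subset hsub1 hins
  have hB := rk'_insert_eq_of_subset hsub2 hins
  have hU := rk'_insert_eq_of_subset hsub3 hins
  rw [Set.insert_diff_singleton, insert_eq_of_mem hxA] at hA
  rw [Set.insert_diff_singleton, insert_eq_of_mem hxB] at hB
  rw [Set.insert_diff_singleton, insert_eq_of_mem (Set.mem_union_left B hxA)] at hU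
  unfold ModularPairSets at hmod ⊢
  rw [idInt, idUn]
  rw [Set.insert_diff_singleton, insert_eq_of_mem (Set.mem_inter hxA hxB)] at hins
  omega

lemma modpair_con {he : M.Indep {e}} (hmod : M.ModularPairSets A B)
    (heA : e ∈ A) (heB : e ∈ B) :
    (M.con e he).ModularPairSets (A \ {e}) (B \ {e}) := by
  have idInt : (A \ {e}) ∩ (B \ {e}) = (A ∩ B) \ {e} := by
    ext y
    exact ⟨fun h => ⟨⟨h.1.1, h.2.1⟩, h.1.2⟩, fun h => ⟨⟨h.1.1, h.2⟩, ⟨h.1.2, h.2⟩⟩⟩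
  have idUn : (A \ {e}) ∪ (B \ {e}) = (A ∪ B) \ {e} := (Set.union_diff_distrib).symm
  have h1 := con_rk' (he := he) (S := (A ∩ B) \ {e}) (by simp)
  have h2 := con_rk' (he := he) (S := (A ∪ B) \ {e}) (by simp)
  have h3 := con_rk' (he := he) (S := A \ {e}) (by simp)
  have h4 := con_rk' (he := he) (S := B \ {e}) (by simp)
  rw [Set.insert_diff_singleton, insert_eq_of_mem (Set.mem_inter heA heB)] at h1
  rw [Set.insert_diff_singleton, insert_eq_of_mem (Set.mem_union_left B heA)] at h2
  rw [Set.insert_diff_singleton, insert_eq_of_mem heA] at h3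
  rw [Set.insert_diff_singleton, insert_eq_of_mem heB] at h4
  unfold ModularPairSets at hmod ⊢
  rw [idInt, idUn]
  omega


lemma del_union (hxB : x ∉ B) : (A \ {x}) ∪ B = (A ∪ B) \ {x} := by
  ext y
  by_cases hy : y = x
  · subst hy
    simp [hxB]
  · simp [hy]

lemma keyLemma : ∀ n : ℕ, ∀ M : Matroid α, ∀ L : Set (Set α), M.LinearClass L →
    ∀ A B : Set α, A ⊆ M.E → B ⊆ M.E → M.ModularPairSets A B →
    (∀ C, M.IsCircuit' C → C ⊆ A → C ∈ L) →
    (∀ C, M.IsCircuit' C → C ⊆ B → C ∈ L) →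
    M.E.ncard + (A ∪ B).ncard ≤ n →
    ∀ Z, M.IsCircuit' Z → Z ⊆ A ∪ B → Z ∈ L := by
  intro n
  induction n using Nat.strong_induction_on with
  | _ n ih =>
  intro M L hL A B hAE hBE hmod hgA hgB hn Z hZ hZAB
  by_cases hZA : Z ⊆ A
  · exact hgA Z hZ hZA
  by_cases hZB : Z ⊆ B
  · exact hgB Z hZ hZB
  have hUfin : (A ∪ B).Finite := toFinite _
  -- a helper to recurse after deleting a point of `A \ B` not in a target circuit
  have hdelA : ∀ x, x ∈ A → x ∉ B → ∀ F, M.IsCircuit' F → F ⊆ A ∪ B → x ∉ F → F ∈ L := by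
    intro x hxA hxB F hF hFsub hxF
    have hm : M.E.ncard + ((A \ {x}) ∪ B).ncard < n := by
      rw [del_union hxB]
      have h1 := Set.ncard_diff_singleton_add_one (Set.mem_union_left B hxA) hUfin
      omega
    refine ih _ hm M L hL (A \ {x}) B (diff_subset.trans hAE) hBE
      (modpair_del hmod hxA hxB) (fun C hC hCs => hgA C hC (hCs.trans diff_subset)) hgB
      le_rfl F hF ?_
    rw [del_union hxB]
    exact fun y hy => ⟨hFsub hy, fun hh => hxF (hh ▸ hy)⟩
  have hdelB : ∀ x, x ∈ B → x ∉ A → ∀ F, M.IsCircuit' F → F ⊆ A ∪ B → x ∉ F → F ∈ L := by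
    intro x hxB hxA F hF hFsub hxF
    have hm : M.E.ncard + (A ∪ (B \ {x})).ncard < n := by
      rw [union_comm, del_union hxA]
      have h1 := Set.ncard_diff_singleton_add_one (Set.mem_union_right A hxB) hUfin
      rw [union_comm] at h1
      have hcomm : (B ∪ A).ncard = (A ∪ B).ncard := by rw [union_comm]
      omega
    refine ih _ hm M L hL A (B \ {x}) hAE (diff_subset.trans hBE)
      (modularPairSets_comm (modpair_del (modularPairSets_comm hmod) hxB hxA))
      hgA (fun C hC hCs => hgB C hC (hCs.trans diff_subset)) le_rfl F hF ?_
    rw [union_comm, del_union hxA]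
    refine fun y hy => ⟨?_, fun hh => hxF (hh ▸ hy)⟩
    rcases hFsub hy with h | h
    · exact Or.inr h
    · exact Or.inl h
  -- reduction 1: every element of `A △ B` lies in `Z`
  by_cases hred1 : ∃ x, x ∈ A ∧ x ∉ B ∧ x ∉ Z
  · obtain ⟨x, h1, h2, h3⟩ := hred1
    exact hdelA x h1 h2 Z hZ hZAB h3
  by_cases hred1' : ∃ x, x ∈ B ∧ x ∉ A ∧ x ∉ Z
  · obtain ⟨x, h1, h2, h3⟩ := hred1'
    exact hdelB x h1 h2 Z hZ hZAB h3
  push_neg at hred1 hred1'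
  -- reduction 2: no removable element of `(A ∩ B) \ Z`
  by_cases hred2 : ∃ x, x ∈ A ∧ x ∈ B ∧ x ∉ Z ∧ M.rk' ((A ∩ B) \ {x}) = M.rk' (A ∩ B)
  · obtain ⟨x, h1, h2, h3, h4⟩ := hred2
    have hm : M.E.ncard + ((A \ {x}) ∪ (B \ {x})).ncard < n := by
      rw [← Set.union_diff_distrib]
      have h5 := Set.ncard_diff_singleton_add_one (Set.mem_union_left B h1) hUfin
      omega
    refine ih _ hm M L hL (A \ {x}) (B \ {x}) (diff_subset.trans hAE)
      (diff_subset.trans hBE) (modpair_del2 hmod h1 h2 h4)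
      (fun C hC hCs => hgA C hC (hCs.trans diff_subset))
      (fun C hC hCs => hgB C hC (hCs.trans diff_subset)) le_rfl Z hZ ?_
    rw [← Set.union_diff_distrib]
    exact fun y hy => ⟨hZAB hy, fun hh => h3 (hh ▸ hy)⟩
  push_neg at hred2
  -- non-loop helper
  have hnl : ∀ x, x ∈ A → x ∈ B → x ∉ Z → M.Indep {x} := by
    intro x h1 h2 h3
    by_contra hloop
    refine hred2 x h1 h2 h3 ?_
    have := rk'_insert_of_not_indep hloop ((A ∩ B) \ {x})
    rw [Set.insert_diff_singleton, insert_eq_of_mem (Set.mem_inter h1 h2)] at this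
    exact this.symm
  by_cases hTZ : ∃ x, x ∈ A ∧ x ∈ B ∧ x ∈ Z
  · -- contract e ∈ A ∩ B ∩ Z
    obtain ⟨e, heA, heB, heZ⟩ := hTZ
    have he : M.Indep {e} := by
      refine hZ.2 {e} (ssubset_of_ne_of_subset (fun hh => hZA ?_) (singleton_subset_iff.2 heZ))
      rw [← hh]
      exact singleton_subset_iff.2 heA
    have heE : e ∈ M.E := hAE heA
    have hE' : (M.con e he).E.ncard + 1 = M.E.ncard := by
      rw [con_E]
      exact Set.ncard_diff_singleton_add_one heE (toFinite _)
    have hm : (M.con e he).E.ncard + ((A \ {e}) ∪ (B \ {e})).ncard < n := by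
      rw [← Set.union_diff_distrib]
      have h5 := Set.ncard_diff_singleton_add_one (Set.mem_union_left B heA) hUfin
      omega
    have hres := ih _ hm (M.con e he) (M.conClass e he L) (conClass_linearClass hL)
      (A \ {e}) (B \ {e})
      (by rw [con_E]; exact diff_subset_diff_left hAE)
      (by rw [con_E]; exact diff_subset_diff_left hBE)
      (modpair_con hmod heA heB)
      (by
        intro C hC hCs
        rcases con_circuit_cases hC with h | h
        · exact ⟨hC, Or.inl (hgA _ h (hCs.trans diff_subset))⟩
        · exact ⟨hC, Or.inr (hgA _ h (insert_subset heA (hCs.trans diff_subset)))⟩)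
      (by
        intro C hC hCs
        rcases con_circuit_cases hC with h | h
        · exact ⟨hC, Or.inl (hgB _ h (hCs.trans diff_subset))⟩
        · exact ⟨hC, Or.inr (hgB _ h (insert_subset heB (hCs.trans diff_subset)))⟩)
      le_rfl (Z \ {e}) (con_circuit_diff hZ heZ)
      (by rw [← Set.union_diff_distrib]; exact diff_subset_diff_left hZAB)
    rcases hres.2 with h | h
    · exfalso
      exact (hL.1 _ h).dep.not_indep (hZ.2 _ (Set.sdiff_singleton_ssubset.2 heZ))
    · rwa [Set.insert_diff_singleton, insert_eq_of_mem heZ] at h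
  push_neg at hTZ
  -- now `Z = (A \ B) ∪ (B \ A)` and `A ∩ B` is nonempty
  have hZeq : Z = (A \ B) ∪ (B \ A) := by
    ext z
    constructor
    · intro hz
      rcases hZAB hz with h | h
      · exact Or.inl ⟨h, fun hh => hTZ z h hh hz⟩
      · exact Or.inr ⟨h, fun hh => hTZ z hh h hz⟩
    · rintro (h | h)
      · exact hred1 z h.1 h.2
      · exact hred1' z h.1 h.2
  have hTne : ∃ e, e ∈ A ∧ e ∈ B := by
    by_contra hT
    push_neg at hT
    have hAZ : A ⊆ Z := fun a ha => hred1 a ha (hT a ha)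
    have hBZ : B ⊆ Z := fun b hb => hred1' b hb (fun hh => hT b hh hb)
    have hAi : M.Indep A := hZ.2 A (ssubset_of_ne_of_subset (fun hh => hZA (hh ▸ subset_rfl)) hAZ)
    have hBi : M.Indep B := hZ.2 B (ssubset_of_ne_of_subset (fun hh => hZB (hh ▸ subset_rfl)) hBZ)
    have hUZ : A ∪ B = Z := subset_antisymm (union_subset hAZ hBZ) hZAB
    have hint : A ∩ B = ∅ := by
      ext y
      exact ⟨fun h => absurd h.2 (hT y h.1), fun h => absurd h (notMem_empty y)⟩
    have hm := hmod
    unfold ModularPairSets at hm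
    rw [hUZ, hint] at hm
    rw [M.rk'_empty, hAi.rk'_eq, hBi.rk'_eq] at hm
    have hZr := hZ.rk'_add_one
    have hcards := Set.ncard_union_add_ncard_inter A B (toFinite A) (toFinite B)
    rw [hUZ, hint] at hcards
    simp only [Set.ncard_empty] at hcards
    omega
  obtain ⟨e, heA, heB⟩ := hTne
  have heZ : e ∉ Z := hTZ e heA heB
  have he : M.Indep {e} := hnl e heA heB heZ
  have heE : e ∈ M.E := hAE heA
  by_cases hZcon : (M.con e he).IsCircuit' Z
  · -- `Z` survives contraction
    have hE' : (M.con e he).E.ncard + 1 = M.E.ncard := by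
      rw [con_E]
      exact Set.ncard_diff_singleton_add_one heE (toFinite _)
    have hm : (M.con e he).E.ncard + ((A \ {e}) ∪ (B \ {e})).ncard < n := by
      rw [← Set.union_diff_distrib]
      have h5 := Set.ncard_diff_singleton_add_one (Set.mem_union_left B heA) hUfin
      omega
    have hres := ih _ hm (M.con e he) (M.conClass e he L) (conClass_linearClass hL)
      (A \ {e}) (B \ {e})
      (by rw [con_E]; exact diff_subset_diff_left hAE)
      (by rw [con_E]; exact diff_subset_diff_left hBE)
      (modpair_con hmod heA heB)
      (by
        intro C hC hCs
        rcases con_circuit_cases hC with h | h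
        · exact ⟨hC, Or.inl (hgA _ h (hCs.trans diff_subset))⟩
        · exact ⟨hC, Or.inr (hgA _ h (insert_subset heA (hCs.trans diff_subset)))⟩)
      (by
        intro C hC hCs
        rcases con_circuit_cases hC with h | h
        · exact ⟨hC, Or.inl (hgB _ h (hCs.trans diff_subset))⟩
        · exact ⟨hC, Or.inr (hgB _ h (insert_subset heB (hCs.trans diff_subset)))⟩)
      le_rfl Z hZcon
      (by
        rw [← Set.union_diff_distrib]
        exact fun y hy => ⟨hZAB hy, fun hh => heZ (hh ▸ hy)⟩)
    rcases hres.2 with h | h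
    · exact h
    · exfalso
      exact hZ.dep.not_indep ((hL.1 _ h).2 Z (ssubset_insert heZ))
  · -- direct endgame in the nullity-2 set `insert e Z`
    rcases con_circuit_of_circuit (he := he) hZ heZ with h | h
    · exact absurd h hZcon
    obtain ⟨D, hDfull, hDZ, heD⟩ := h
    have hDne : D.Nonempty := by
      rw [Set.nonempty_iff_ne_empty]
      rintro rfl
      exact hDfull.dep.not_indep (by simpa using he)
    have hDind : M.Indep D := hZ.2 D hDZ
    have hDfr := hDfull.rk'_add_one
    rw [Set.ncard_insert_of_notMem heD (toFinite D)] at hDfr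
    have hDe : M.rk' (insert e D) = M.rk' D := by
      rw [hDind.rk'_eq]
      omega
    have hclZ : M.rk' (insert e Z) = M.rk' Z := rk'_insert_eq_of_subset hDZ.subset hDe
    have hZr := hZ.rk'_add_one
    have hinsZcard : (insert e Z).ncard = Z.ncard + 1 :=
      Set.ncard_insert_of_notMem heZ (toFinite Z)
    -- every circuit inside `insert e Z` other than `Z` is in `L`
    have hstar : ∀ F, M.IsCircuit' F → F ⊆ insert e Z → F ≠ Z → F ∈ L := by
      intro F hF hFsub hFne
      have heF : e ∈ F := by
        by_contra heF
        have hFZ : F ⊆ Z := fun y hy =>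
          (hFsub hy).resolve_left (fun hh => heF (hh ▸ hy))
        rcases eq_or_ssubset_of_subset hFZ with h | h
        · exact hFne h
        · exact hF.dep.not_indep (hZ.2 F h)
      have hFeZ : F \ {e} ⊆ Z := by
        intro y hy
        rcases hFsub hy.1 with h | h
        · exact absurd h hy.2
        · exact h
      have hFprop : F \ {e} ≠ Z := by
        intro hh
        have h1 : insert e (F \ {e}) = F := by
          rw [Set.insert_diff_singleton, insert_eq_of_mem heF]
        rw [hh] at h1
        have hZF : Z ⊂ F := by
          rw [← h1]
          exact ssubset_insert heZ
        exact hZ.dep.not_indep (hF.2 Z hZF)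
      obtain ⟨z0, hz0, hz0n⟩ := exists_of_ssubset (ssubset_of_ne_of_subset hFprop hFeZ)
      have hz0F : z0 ∉ F := fun hh => hz0n ⟨hh, fun hee => heZ (hee ▸ hz0)⟩
      have hFU : F ⊆ A ∪ B :=
        hFsub.trans (insert_subset (Set.mem_union_left B heA) hZAB)
      have hz0AB : z0 ∈ (A \ B) ∪ (B \ A) := hZeq ▸ hz0
      rcases hz0AB with hz0' | hz0'
      · exact hdelA z0 hz0'.1 hz0'.2 F hF hFU hz0F
      · exact hdelB z0 hz0'.1 hz0'.2 F hF hFU hz0F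
    have hDL : insert e D ∈ L :=
      hstar _ hDfull (insert_subset_insert hDZ.subset)
        (fun hh => heZ (hh ▸ mem_insert e D))
    obtain ⟨w, hwD⟩ := hDne
    have hwZ : w ∈ Z := hDZ.subset hwD
    have hZD : Z ≠ insert e D := fun hh => heZ (hh ▸ mem_insert e D)
    obtain ⟨F, hF, hFsub⟩ := circuit_elim hZ hDfull hZD
      (Set.mem_inter hwZ (mem_insert_of_mem e hwD))
    have hZDeq : Z ∪ insert e D = insert e Z := by
      rw [Set.union_insert, union_eq_self_of_subset_right hDZ.subset]
    rw [hZDeq] at hFsub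
    have hwF : w ∉ F := fun hh => (hFsub hh).2 rfl
    have hFne : F ≠ Z := fun hh => hwF (hh ▸ hwZ)
    have hFL : F ∈ L := hstar F hF (hFsub.trans diff_subset) hFne
    -- `Z ⊆ insert e D ∪ F`
    have hcover : Z ⊆ insert e D ∪ F := by
      by_contra hcov
      rw [Set.not_subset] at hcov
      obtain ⟨z, hzZ, hzn⟩ := hcov
      have hznD : z ∉ insert e D := fun hh => hzn (Or.inl hh)
      have hznF : z ∉ F := fun hh => hzn (Or.inr hh)
      have hzD : insert e D ⊆ insert e Z \ {z} := by
        intro y hy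
        exact ⟨insert_subset_insert hDZ.subset hy, fun hh => hznD (hh ▸ hy)⟩
      have hzF : F ⊆ insert e Z \ {z} := by
        intro y hy
        exact ⟨(hFsub.trans diff_subset) hy, fun hh => hznF (hh ▸ hy)⟩
      have hZzi : M.Indep (Z \ {z}) := hZ.2 _ (Set.sdiff_singleton_ssubset.2 hzZ)
      have hge : M.rk' (Z \ {z}) ≤ M.rk' (insert e Z \ {z}) := by
        refine M.rk'_mono fun y hy => ⟨Or.inr hy.1, hy.2⟩
      have hle : M.rk' (insert e Z \ {z}) ≤ M.rk' (insert e Z) := M.rk'_mono diff_subset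
      have hZzr : M.rk' (Z \ {z}) = Z.ncard - 1 := by
        rw [hZzi.rk'_eq, Set.ncard_diff_singleton_of_mem hzZ]
      have hScard : (insert e Z \ {z}).ncard = Z.ncard := by
        rw [Set.ncard_diff_singleton_of_mem (mem_insert_of_mem e hzZ), hinsZcard]
        omega
      have heq := circuit_unique_of_nullity_le_one (S := insert e Z \ {z})
        (by omega) hDfull hF hzD hzF
      exact hwF (heq ▸ (mem_insert_of_mem e hwD))
    have hDF_ne : insert e D ≠ F := fun hh => hwF (hh ▸ mem_insert_of_mem e hwD)
    have hDFsub : insert e D ∪ F ⊆ insert e Z :=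
      union_subset (insert_subset_insert hDZ.subset) (hFsub.trans diff_subset)
    have hnull2 := circuit_pair_nullity hDfull hF hDF_ne
    have hmono := M.nullity_mono hDFsub
    have hintDF : M.rk' (insert e D ∩ F) = (insert e D ∩ F).ncard := by
      have hpr : insert e D ∩ F ⊂ insert e D := by
        refine ssubset_of_ne_of_subset (fun hh => hDF_ne ?_) inter_subset_left
        exact hDfull.eq_of_subset hF (by rw [← hh]; exact inter_subset_right)
      exact (hDfull.2 _ hpr).rk'_eq
    have hcards := Set.ncard_union_add_ncard_inter (insert e D) F (toFinite _) (toFinite _)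
    have hDr := hDfull.rk'_add_one
    have hFr := hF.rk'_add_one
    have hmodDF : M.ModularPairSets (insert e D) F := by
      unfold ModularPairSets
      omega
    exact hL.2 _ hDL _ hFL hmodDF Z hZ hcover


lemma ModularIdeal.indep_mem {Id : Set (Set α)} (hId : M.ModularIdeal Id)
    (hS : M.Indep S) : S ∈ Id := by
  have hgen : ∀ n (S : Set α), S.ncard ≤ n → M.Indep S → S ∈ Id := by
    intro n
    induction n with
    | zero =>
      intro S hn _
      rw [Nat.le_zero, Set.ncard_eq_zero (toFinite S)] at hn
      obtain ⟨W, hW⟩ := hId.1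
      exact hn ▸ hId.2.1 ∅ W (empty_subset W) hW
    | succ n ihn =>
      intro S hn hS
      rcases Set.eq_empty_or_nonempty S with rfl | ⟨x, hxS⟩
      · obtain ⟨W, hW⟩ := hId.1
        exact hId.2.1 ∅ W (empty_subset W) hW
      have hcard := Set.ncard_diff_singleton_add_one hxS (toFinite S)
      have hS' : S \ {x} ∈ Id := ihn (S \ {x}) (by omega) (hS.subset diff_subset)
      have hx : {x} ∈ Id := hId.2.2.1 x (hS.subset (singleton_subset_iff.2 hxS))
      have hmp : M.ModularPairSets {x} (S \ {x}) := by
        unfold ModularPairSets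
        have h1 : ({x} : Set α) ∩ (S \ {x}) = ∅ :=
          Set.singleton_inter_eq_empty.2 (by simp)
        have h2 : ({x} : Set α) ∪ (S \ {x}) = S := by
          rw [Set.singleton_union, Set.insert_diff_singleton, insert_eq_of_mem hxS]
        rw [h1, h2, M.rk'_empty, hS.rk'_eq,
          (hS.subset (singleton_subset_iff.2 hxS)).rk'_eq,
          (hS.subset diff_subset).rk'_eq, Set.ncard_singleton]
        rw [Set.ncard_diff_singleton_of_mem hxS]
        omega
      have := hId.2.2.2 _ _ hx hS' hmp
      rwa [Set.singleton_union, Set.insert_diff_singleton, insert_eq_of_mem hxS] at this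
  exact hgen S.ncard S le_rfl hS

lemma ModularIdeal.mem_iff_circuits {Id : Set (Set α)} (hId : M.ModularIdeal Id)
    (hE : M.E = univ) :
    S ∈ Id ↔ ∀ C, M.IsCircuit' C → C ⊆ S → C ∈ Id := by
  constructor
  · exact fun h C _ hCS => hId.2.1 C S hCS h
  · intro h
    obtain ⟨J, hJ⟩ := M.exists_isBasis' S
    have hgen : ∀ n (D : Set α), D.ncard ≤ n → D ⊆ S \ J → J ∪ D ∈ Id := by
      intro n
      induction n with
      | zero =>
        intro D hn _
        rw [Nat.le_zero, Set.ncard_eq_zero (toFinite D)] at hn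
        subst hn
        rw [union_empty]
        exact hId.indep_mem hJ.indep
      | succ n ihn =>
        intro D hn hD
        rcases Set.eq_empty_or_nonempty D with rfl | ⟨x, hxD⟩
        · rw [union_empty]
          exact hId.indep_mem hJ.indep
        have hcard := Set.ncard_diff_singleton_add_one hxD (toFinite D)
        have hD' : J ∪ (D \ {x}) ∈ Id := ihn (D \ {x}) (by omega) (diff_subset.trans hD)
        have hxS : x ∈ S := (hD hxD).1
        have hxJ : x ∉ J := (hD hxD).2
        have hJr := hJ.rk'_eq
        have hrins : M.rk' (insert x J) = J.ncard := by
          refine le_antisymm ?_ (le_rk' hJ.indep (subset_insert x J))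
          have := M.rk'_mono (insert_subset hxS hJ.subset)
          omega
        have hdep : M.Dep (insert x J) := by
          rw [dep_iff_rk' (by rw [hE]; exact subset_univ _), hrins,
            Set.ncard_insert_of_notMem hxJ (toFinite J)]
          omega
        obtain ⟨C, hC, hCsub⟩ := hdep.exists_circuit''
        have hxC : x ∈ C := by
          by_contra hxC
          refine hC.dep.not_indep (hJ.indep.subset fun y hy => ?_)
          rcases hCsub hy with hh | hh
          · exact absurd (hh ▸ hy) hxC
          · exact hh
        have hCS : C ⊆ S := hCsub.trans (insert_subset hxS hJ.subset)
        have hCId : C ∈ Id := h C hC hCS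
        have hCJ : C \ {x} ⊆ J := by
          intro y hy
          rcases hCsub hy.1 with hh | hh
          · exact absurd hh hy.2
          · exact hh
        have hint : (J ∪ (D \ {x})) ∩ C = C \ {x} := by
          ext y
          constructor
          · rintro ⟨hy1, hy2⟩
            rcases hy1 with hh | hh
            · exact ⟨hy2, fun hxx => hxJ (hxx ▸ hh)⟩
            · exact ⟨hy2, hh.2⟩
          · intro hy
            exact ⟨Or.inl (hCJ hy), hy.1⟩
        have hun : (J ∪ (D \ {x})) ∪ C = J ∪ D := by
          apply subset_antisymm
          · refine union_subset (union_subset subset_union_left ?_) ?_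
            · exact (diff_subset.trans subset_union_right)
            · intro y hy
              rcases hCsub hy with hh | hh
              · exact Or.inr (hh ▸ hxD)
              · exact Or.inl hh
          · refine union_subset (subset_union_left.trans subset_union_left) ?_
            intro y hy
            by_cases hyx : y = x
            · exact Or.inr (hyx ▸ hxC)
            · exact Or.inl (Or.inr ⟨hy, hyx⟩)
        have hmp : M.ModularPairSets (J ∪ (D \ {x})) C := by
          unfold ModularPairSets
          rw [hint, hun]
          have r1 : M.rk' (C \ {x}) = C.ncard - 1 := by
            rw [(hC.diff_singleton_indep hxC).rk'_eq,
              Set.ncard_diff_singleton_of_mem hxC]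
          have r2 := hC.rk'_add_one
          have r3 : M.rk' (J ∪ (D \ {x})) = J.ncard := by
            refine le_antisymm ?_ (le_rk' hJ.indep subset_union_left)
            have : J ∪ (D \ {x}) ⊆ S :=
              union_subset hJ.subset ((diff_subset.trans hD).trans diff_subset)
            have := M.rk'_mono this
            omega
          have r4 : M.rk' (J ∪ D) = J.ncard := by
            refine le_antisymm ?_ (le_rk' hJ.indep subset_union_left)
            have : J ∪ D ⊆ S := union_subset hJ.subset (hD.trans diff_subset)
            have := M.rk'_mono this
            omega
          have r5 : 1 ≤ C.ncard := (Set.ncard_pos (toFinite C)).2 hC.nonempty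
          rw [r1, r3, r4]
          omega
        have := hId.2.2.2 _ _ hD' hCId hmp
        rwa [hun] at this
    have := hgen (S \ J).ncard (S \ J) le_rfl subset_rfl
    rwa [Set.union_diff_cancel hJ.subset] at this

end Matroid

/-- The map `I ↦ I ∩ 𝒞(M)` is a bijection from modular ideals of `M` onto linear classes of
circuits of `M`, and it is a lattice (order) isomorphism. -/
theorem modularIdeals_equiv_linearClasses
    {α : Type*} [Fintype α] (M : Matroid α) (hE : M.E = Set.univ) :
    Set.BijOn (fun I : Set (Set α) => I ∩ {C : Set α | M.IsCircuit' C})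
      {I : Set (Set α) | M.ModularIdeal I} {L : Set (Set α) | M.LinearClass L} ∧
    ∀ I₁ I₂ : Set (Set α), M.ModularIdeal I₁ → M.ModularIdeal I₂ →
      (I₁ ⊆ I₂ ↔
        I₁ ∩ {C : Set α | M.IsCircuit' C} ⊆ I₂ ∩ {C : Set α | M.IsCircuit' C}) := by
  have hground : ∀ S : Set α, S ⊆ M.E := by rw [hE]; exact fun S => subset_univ S
  have horder : ∀ I₁ I₂ : Set (Set α), M.ModularIdeal I₁ → M.ModularIdeal I₂ →
      (I₁ ⊆ I₂ ↔
        I₁ ∩ {C : Set α | M.IsCircuit' C} ⊆ I₂ ∩ {C : Set α | M.IsCircuit' C}) := by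
    intro I₁ I₂ h₁ h₂
    constructor
    · exact fun h S hS => ⟨h hS.1, hS.2⟩
    · intro h S hS
      rw [h₂.mem_iff_circuits hE]
      intro C hC hCS
      have hC₁ : C ∈ I₁ := h₁.2.1 C S hCS hS
      exact (h ⟨hC₁, hC⟩).1
  refine ⟨⟨?_, ?_, ?_⟩, horder⟩
  · -- MapsTo
    intro Id hId
    refine ⟨fun C hC => hC.2, ?_⟩
    intro X hX Y hY hmod Z hZ hZsub
    have hXY : X ∪ Y ∈ Id := hId.2.2.2 X Y hX.1 hY.1 hmod
    exact ⟨hId.2.1 Z (X ∪ Y) hZsub hXY, hZ⟩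
  · -- InjOn
    intro I₁ h₁ I₂ h₂ heq
    simp only at heq
    ext S
    rw [Set.mem_setOf_eq] at h₁ h₂
    rw [h₁.mem_iff_circuits hE, h₂.mem_iff_circuits hE]
    constructor
    · intro h C hC hCS
      have : C ∈ I₁ ∩ {C : Set α | M.IsCircuit' C} := ⟨h C hC hCS, hC⟩
      exact (heq ▸ this).1
    · intro h C hC hCS
      have : C ∈ I₂ ∩ {C : Set α | M.IsCircuit' C} := ⟨h C hC hCS, hC⟩
      exact (heq ▸ this).1
  · -- SurjOn
    intro L hL
    rw [Set.mem_setOf_eq] at hL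
    refine ⟨{S : Set α | ∀ C, M.IsCircuit' C → C ⊆ S → C ∈ L}, ?_, ?_⟩
    · refine ⟨⟨∅, fun C hC hCsub => absurd (subset_empty_iff.1 hCsub) ?_⟩, ?_, ?_, ?_⟩
      · exact Set.nonempty_iff_ne_empty.1 hC.nonempty
      · exact fun A B hAB hB C hC hCS => hB C hC (hCS.trans hAB)
      · intro e he C hC hCsub
        exfalso
        rcases Set.subset_singleton_iff_eq.1 hCsub with h | h
        · exact Set.nonempty_iff_ne_empty.1 hC.nonempty h
        · exact hC.dep.not_indep (h ▸ he)
      · intro A B hA hB hmod C hC hCsub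
        exact Matroid.keyLemma (M.E.ncard + (A ∪ B).ncard) M L hL A B (hground A) (hground B)
          hmod (fun C' hC' hCs => hA C' hC' hCs) (fun C' hC' hCs => hB C' hC' hCs)
          le_rfl C hC hCsub
    · ext C
      simp only [Set.mem_inter_iff, Set.mem_setOf_eq]
      constructor
      · rintro ⟨hmem, hC⟩
        exact hmem C hC subset_rfl
      · intro hC
        refine ⟨fun D hD hDC => ?_, hL.1 C hC⟩
        have : D = C := hD.eq_of_subset (hL.1 C hC) hDC
        exact this ▸ hC
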